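/- Let $w : D \to \mathbb{R}$ be a decreasing function on a full measure subset $D \subset (0,l)$ satisfying $\limsup_{D \ni t \to t_0^+}\frac{w(t)-w(t_0)}{t-t_0} \le -1 - w(t_0)^2$ for all $t_0 \in D$. Then for any $t_0, \bar t \in D$ with $t_0 < \bar t$ at which $w$ is differentiable (as a function on $D$), one has $\arctan w(\bar t) - \arctan w(t_0) \le -(\bar t - t_0)$. -/

import Mathlib

open Filter MeasureTheory Set Real Topology

theorem stmt1 (l : ℝ) (hl : 0 < l)
    (D : Set ℝ) (hD : D ⊆ Set.Ioo 0 l)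
    (hfull : volume (Set.Ioo 0 l \ D) = 0)
    (w : ℝ → ℝ)
    (hdec : ∀ t1 ∈ D, ∀ t2 ∈ D, t1 < t2 → w t2 < w t1)
    (hlimsup : ∀ t0 ∈ D,
      Filter.limsup (fun t => (w t - w t0) / (t - t0)) ((𝓝[>] t0) ⊓ 𝓟 D)
        ≤ -1 - (w t0) ^ 2)
    (t0 tb : ℝ) (ht0 : t0 ∈ D) (htb : tb ∈ D) (hlt : t0 < tb)
    (hdiff0 : ∃ d : ℝ, Filter.Tendsto (fun t => (w t - w t0) / (t - t0))
      ((𝓝[≠] t0) ⊓ 𝓟 D) (𝓝 d))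
    (hdiffb : ∃ d : ℝ, Filter.Tendsto (fun t => (w t - w tb) / (t - tb))
      ((𝓝[≠] tb) ⊓ 𝓟 D) (𝓝 d)) :
    Real.arctan (w tb) - Real.arctan (w t0) ≤ -(tb - t0) := by
  have h0t0 : 0 < t0 := (hD ht0).1
  have htbl : tb < l := (hD htb).2
  -- weak monotonicity of w on D
  have hmono : ∀ s ∈ D, ∀ t ∈ D, s ≤ t → w t ≤ w s := by
    intro s hs t ht hst
    rcases eq_or_lt_of_le hst with rfl | h
    · exact le_refl _
    · exact (hdec s hs t ht h).le
  -- the clamped infimum function G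
  set c : ℝ → ℝ := fun t => max t0 (min t tb) with hc
  set G : ℝ → ℝ := fun t => sInf ((fun s => Real.arctan (w s)) '' (D ∩ Set.Icc t0 (c t))) with hG
  have hmemt0 : ∀ t : ℝ, t0 ∈ D ∩ Set.Icc t0 (c t) := by
    intro t
    exact ⟨ht0, le_refl _, le_max_left _ _⟩
  have hne : ∀ t : ℝ, ((fun s => Real.arctan (w s)) '' (D ∩ Set.Icc t0 (c t))).Nonempty :=
    fun t => ⟨_, mem_image_of_mem _ (hmemt0 t)⟩
  have hbdd : ∀ t : ℝ, BddBelow ((fun s => Real.arctan (w s)) '' (D ∩ Set.Icc t0 (c t))) := by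
    intro t
    refine ⟨-(Real.pi / 2), ?_⟩
    rintro x ⟨s, -, rfl⟩
    exact (Real.neg_pi_div_two_lt_arctan _).le
  -- f = -G is monotone
  set f : ℝ → ℝ := fun t => -G t with hf
  have hfmono : Monotone f := by
    intro a b hab
    simp only [hf, neg_le_neg_iff, hG]
    apply csInf_le_csInf (hbdd b) (hne a)
    apply image_mono
    apply inter_subset_inter_right
    apply Icc_subset_Icc_right
    exact max_le_max (le_refl _) (min_le_min hab (le_refl _))
  -- value of G on D ∩ [t0, tb]
  have hGval : ∀ t ∈ D, t ∈ Set.Icc t0 tb → G t = Real.arctan (w t) := by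
    intro t ht htI
    have hct : c t = t := by
      simp only [hc]
      rw [min_eq_left htI.2, max_eq_right htI.1]
    apply le_antisymm
    · apply csInf_le (hbdd t)
      exact ⟨t, ⟨ht, by rw [hct]; exact ⟨htI.1, le_refl _⟩⟩, rfl⟩
    · apply le_csInf (hne t)
      rintro x ⟨s, ⟨hsD, hsI⟩, rfl⟩
      have : w t ≤ w s := hmono s hsD t ht (by rw [hct] at hsI; exact hsI.2)
      exact Real.arctan_strictMono.monotone this
  have hGt0 : G t0 = Real.arctan (w t0) := hGval t0 ht0 ⟨le_refl _, hlt.le⟩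
  have hGtb : G tb = Real.arctan (w tb) := hGval tb htb ⟨hlt.le, le_refl _⟩
  -- the inf filter is nontrivial at interior points
  have hNeBot : ∀ t ∈ Set.Ioo t0 tb, ((𝓝[>] t) ⊓ 𝓟 D).NeBot := by
    intro t htI
    rw [Filter.inf_principal_neBot_iff]
    intro U hU
    rcases mem_nhdsGT_iff_exists_Ioo_subset.mp hU with ⟨u, hu, hsub⟩
    set v := min u tb with hv
    have htv : t < v := lt_min hu htI.2
    by_contra hcon
    rw [Set.not_nonempty_iff_eq_empty] at hcon
    have hsub2 : Set.Ioo t v ⊆ Set.Ioo 0 l \ D := by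
      intro x hx
      constructor
      · exact ⟨lt_trans (lt_trans h0t0 htI.1) hx.1, lt_of_lt_of_le (lt_of_lt_of_le hx.2 (min_le_right _ _)) htbl.le⟩
      · intro hxD
        have : x ∈ U ∩ D := ⟨hsub ⟨hx.1, lt_of_lt_of_le hx.2 (min_le_left _ _)⟩, hxD⟩
        rw [hcon] at this
        exact this
    have := measure_mono_null hsub2 hfull
    rw [Real.volume_Ioo] at this
    have : v - t ≤ 0 := by
      by_contra h
      push_neg at h
      rw [ENNReal.ofReal_eq_zero] at this
      linarith
    linarith
  -- a.e., points of Ioo t0 tb are in D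
  have haeD : ∀ᵐ x, x ∈ Set.Ioo t0 tb → x ∈ D := by
    have h1 : ∀ᵐ x, x ∉ Set.Ioo 0 l \ D := measure_eq_zero_iff_ae_notMem.mp hfull
    filter_upwards [h1] with x hx hxI
    by_contra hxD
    exact hx ⟨⟨lt_trans h0t0 hxI.1, lt_trans hxI.2 htbl⟩, hxD⟩
  -- the key derivative bound
  have hkey : ∀ t ∈ Set.Ioo t0 tb, t ∈ D → ∀ d : ℝ, HasDerivAt f d t → 1 ≤ d := by
    intro t htI htD d hd
    haveI : ((𝓝[>] t) ⊓ 𝓟 D).NeBot := hNeBot t htI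
    have hLle : ((𝓝[>] t) ⊓ 𝓟 D) ≤ 𝓝[≠] t :=
      le_trans inf_le_left (nhdsWithin_mono t (fun x hx => ne_of_gt hx))
    have hGt : G t = Real.arctan (w t) := hGval t htD ⟨htI.1.le, htI.2.le⟩
    have hev : ∀ᶠ s in ((𝓝[>] t) ⊓ 𝓟 D), s ∈ D ∩ Set.Ioo t tb := by
      have e1 : Set.Ioo t tb ∈ ((𝓝[>] t) ⊓ 𝓟 D) :=
        Filter.mem_inf_of_left (Ioo_mem_nhdsGT_of_mem ⟨le_refl _, htI.2⟩)
      have e2 : D ∈ ((𝓝[>] t) ⊓ 𝓟 D) := Filter.mem_inf_of_right (Filter.mem_principal_self D)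
      filter_upwards [e1, e2] with s h1 h2
      exact ⟨h2, h1⟩
    have hslope : Filter.Tendsto (fun s => (f s - f t) / (s - t)) (𝓝[≠] t) (𝓝 d) := by
      have h := hasDerivAt_iff_tendsto_slope.mp hd
      simpa only [slope_fun_def_field] using h
    have h1 : Filter.Tendsto (fun s => (G s - G t) / (s - t)) ((𝓝[>] t) ⊓ 𝓟 D) (𝓝 (-d)) := by
      have h := (hslope.mono_left hLle).neg
      refine h.congr (fun s => ?_)
      simp only [hf]
      ring
    have hGtend : Filter.Tendsto G ((𝓝[>] t) ⊓ 𝓟 D) (𝓝 (G t)) := by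
      have hsub : Filter.Tendsto (fun s : ℝ => s - t) ((𝓝[>] t) ⊓ 𝓟 D) (𝓝 0) := by
        have h0 : Filter.Tendsto (fun s : ℝ => s - t) (𝓝 t) (𝓝 (t - t)) :=
          Filter.Tendsto.sub_const tendsto_id t
        rw [sub_self] at h0
        exact h0.mono_left (le_trans inf_le_left nhdsWithin_le_nhds)
      have h2 : Filter.Tendsto (fun s => (G s - G t) / (s - t) * (s - t))
          ((𝓝[>] t) ⊓ 𝓟 D) (𝓝 (-d * 0)) := h1.mul hsub
      have h3 : Filter.Tendsto (fun s => G s - G t) ((𝓝[>] t) ⊓ 𝓟 D) (𝓝 0) := by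
        rw [show (-d * 0 : ℝ) = 0 by ring] at h2
        refine h2.congr' ?_
        filter_upwards [hev] with s hs
        have hne4 : s - t ≠ 0 := sub_ne_zero.mpr (ne_of_gt hs.2.1)
        field_simp
      have := h3.add_const (G t)
      simpa using this
    have hGne : ∀ᶠ s in ((𝓝[>] t) ⊓ 𝓟 D), G s ≠ G t := by
      filter_upwards [hev] with s hs
      rw [hGval s hs.1 ⟨le_trans htI.1.le hs.2.1.le, hs.2.2.le⟩, hGt]
      exact ne_of_lt (Real.arctan_strictMono (hdec t htD s hs.1 hs.2.1))
    have hGp : Filter.Tendsto G ((𝓝[>] t) ⊓ 𝓟 D) (𝓝[≠] (G t)) := by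
      rw [tendsto_nhdsWithin_iff]
      exact ⟨hGtend, hGne⟩
    have hcos : Real.cos (Real.arctan (w t)) ≠ 0 := (Real.cos_arctan_pos _).ne'
    have htan : HasDerivAt Real.tan (1 + w t ^ 2) (G t) := by
      rw [hGt]
      have h := Real.hasDerivAt_tan hcos
      convert h using 1
      rw [Real.cos_sq_arctan, one_div_one_div]
    have h3 : Filter.Tendsto (fun s => slope Real.tan (G t) (G s)) ((𝓝[>] t) ⊓ 𝓟 D)
        (𝓝 (1 + w t ^ 2)) :=
      (hasDerivAt_iff_tendsto_slope.mp htan).comp hGp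
    have h5 : Filter.Tendsto (fun s => (w s - w t) / (s - t)) ((𝓝[>] t) ⊓ 𝓟 D)
        (𝓝 ((1 + w t ^ 2) * (-d))) := by
      refine (h3.mul h1).congr' ?_
      filter_upwards [hev, hGne] with s hs hne2
      have hGs : G s = Real.arctan (w s) := hGval s hs.1 ⟨le_trans htI.1.le hs.2.1.le, hs.2.2.le⟩
      have hne3 : G s - G t ≠ 0 := sub_ne_zero.mpr hne2
      have hne4 : s - t ≠ 0 := sub_ne_zero.mpr (ne_of_gt hs.2.1)
      rw [slope_def_field, div_mul_div_cancel₀ hne3, hGs, hGt, Real.tan_arctan, Real.tan_arctan]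
    have h8 : (1 + w t ^ 2) * (-d) ≤ -1 - w t ^ 2 := by
      have h6 := h5.limsup_eq
      have h7 := hlimsup t htD
      rw [h6] at h7
      exact h7
    nlinarith [sq_nonneg (w t)]
  -- a.e. bound on the Radon-Nikodym derivative
  set μ := hfmono.stieltjesFunction.measure with hμ
  have haernd : ∀ᵐ x, x ∈ Set.Ioo t0 tb → (1 : ENNReal) ≤ μ.rnDeriv volume x := by
    filter_upwards [haeD, hfmono.ae_hasDerivAt] with x hxD hxd hxI
    have h1 : (1 : ℝ) ≤ (μ.rnDeriv volume x).toReal := hkey x hxI (hxD hxI) _ hxd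
    rcases eq_or_ne (μ.rnDeriv volume x) ⊤ with h | h
    · simp [h]
    · rw [← ENNReal.ofReal_toReal h, ← ENNReal.ofReal_one]
      exact ENNReal.ofReal_le_ofReal h1
  -- integration: for each s in (t0, tb), s - t0 ≤ f tb - f t0
  have hint : ∀ s ∈ Set.Ioo t0 tb, s - t0 ≤ f tb - f t0 := by
    intro s hs
    have h1 : ENNReal.ofReal (s - t0) ≤ μ (Set.Ioc t0 s) := by
      calc ENNReal.ofReal (s - t0) = volume (Set.Ioc t0 s) := (Real.volume_Ioc).symm
        _ = ∫⁻ _ in Set.Ioc t0 s, 1 ∂volume := (setLIntegral_one _).symm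
        _ ≤ ∫⁻ x in Set.Ioc t0 s, μ.rnDeriv volume x ∂volume := by
            apply lintegral_mono_ae
            rw [MeasureTheory.ae_restrict_iff' measurableSet_Ioc]
            filter_upwards [haernd] with x hx hxI
            exact hx ⟨hxI.1, lt_of_le_of_lt hxI.2 hs.2⟩
        _ = (volume.withDensity (μ.rnDeriv volume)) (Set.Ioc t0 s) :=
            (withDensity_apply _ measurableSet_Ioc).symm
        _ ≤ μ (Set.Ioc t0 s) := Measure.withDensity_rnDeriv_le μ volume _
    rw [hμ, StieltjesFunction.measure_Ioc] at h1
    have hg0 : hfmono.stieltjesFunction t0 = Function.rightLim f t0 := hfmono.stieltjesFunction_eq t0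
    have hgs : hfmono.stieltjesFunction s = Function.rightLim f s := hfmono.stieltjesFunction_eq s
    have h2 : s - t0 ≤ hfmono.stieltjesFunction s - hfmono.stieltjesFunction t0 := by
      rw [← ENNReal.ofReal_le_ofReal_iff]
      · exact h1
      · rw [sub_nonneg]
        exact hfmono.stieltjesFunction.mono hs.1.le
    have h3 : f t0 ≤ Function.rightLim f t0 := hfmono.le_rightLim (le_refl _)
    have h4 : Function.rightLim f s ≤ f tb := hfmono.rightLim_le hs.2
    rw [hg0, hgs] at h2
    linarith
  -- conclude
  have hfinal : tb - t0 ≤ f tb - f t0 := by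
    have hlim : Filter.Tendsto (fun s : ℝ => s - t0) (𝓝[<] tb) (𝓝 (tb - t0)) :=
      Filter.Tendsto.mono_left (by exact (continuous_id.sub continuous_const).tendsto tb) nhdsWithin_le_nhds
    refine le_of_tendsto hlim ?_
    filter_upwards [Ioo_mem_nhdsLT_of_mem ⟨hlt, le_refl tb⟩] with s hs
    exact hint s hs
  have : f tb - f t0 = Real.arctan (w t0) - Real.arctan (w tb) := by
    simp only [hf, hGt0, hGtb]
    ring
  linarith [hfinal, this ▸ hfinal]
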